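/- In the weighted plane (ℝ², d_eucl, m) described in the context, for every Borel set A ⊆ Ω of finite perimeter one has Per(A ∩ H; H) = Per(A; H), where H = ℝ×[0,∞) is the closed upper half-plane and Per(E;F) := |Dχ_E|_X(F). -/

import Mathlib

set_option linter.unusedSectionVars false
set_option linter.unusedVariables false
open MeasureTheory Metric Set Filter ENNReal NNReal Topology

variable {X : Type*} [PseudoMetricSpace X] [MeasurableSpace X]

/-- The asymptotic Lipschitz constant `lip_a f x = inf_{r>0} Lip(f|_{B_r(x)})`,
computed in `ℝ≥0∞` via the optimal Lipschitz constant on each ball. -/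
noncomputable def lipa (f : X → ℝ) (x : X) : ℝ≥0∞ :=
  ⨅ (r : ℝ) (_ : 0 < r), ⨆ (y : X) (_ : y ∈ ball x r) (z : X) (_ : z ∈ ball x r),
    edist (f y) (f z) / edist y z

/-- `f` is locally Lipschitz on the set `A`. -/
def LocLipOn (f : X → ℝ) (A : Set X) : Prop :=
  ∀ x ∈ A, ∃ r > 0, ball x r ⊆ A ∧ ∃ K : ℝ≥0, LipschitzOnWith K f (ball x r)

/-- `fn → f` in `L¹_loc(μ)`: convergence of the integrals of `|fn n - f|` on bounded sets. -/
def TendstoL1loc (μ : Measure X) (fn : ℕ → X → ℝ) (f : X → ℝ) : Prop :=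
  ∀ S : Set X, Bornology.IsBounded S →
    Tendsto (fun n => ∫⁻ x in S, ENNReal.ofReal |fn n x - f x| ∂μ) atTop (𝓝 0)

/-- Total variation `|Df|(A)` on an open set `A`. -/
noncomputable def totVarOpen (μ : Measure X) (f : X → ℝ) (A : Set X) : ℝ≥0∞ :=
  ⨅ (fn : ℕ → X → ℝ) (_ : ∀ n, LocLipOn (fn n) A) (_ : TendstoL1loc (μ.restrict A) fn f),
    atTop.liminf fun n => ∫⁻ x in A, lipa (fn n) x ∂μ

/-- Total variation `|Df|(B)` of a Borel set `B`, by outer regularization over open sets. -/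
noncomputable def totVar (μ : Measure X) (f : X → ℝ) (B : Set X) : ℝ≥0∞ :=
  ⨅ (A : Set X) (_ : IsOpen A) (_ : B ⊆ A), totVarOpen μ f A

/-- `Per(E; F) = |Dχ_E|_X(F)`. -/
noncomputable def perIn (μ : Measure X) (E F : Set X) : ℝ≥0∞ :=
  totVar μ (E.indicator 1) F

/-- `Per(E) = |Dχ_E|_X(X)`. -/
noncomputable def per (μ : Measure X) (E : Set X) : ℝ≥0∞ := perIn μ E univ

/-- `Per_B(E) = |Dχ_E|_B(B)`: the perimeter of `E` on `B`, computed in `(X, d, μ|_B)`. -/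
noncomputable def perOn (μ : Measure X) (B E : Set X) : ℝ≥0∞ :=
  totVar (μ.restrict B) (E.indicator 1) B

/-- `f ∈ BV(B)`: `f ∈ L¹(μ|_B)` and `|Df|_B(B) < ∞`. -/
def MemBV (μ : Measure X) (B : Set X) (f : X → ℝ) : Prop :=
  Integrable f (μ.restrict B) ∧ totVar (μ.restrict B) f B < ⊤

/-- `‖f‖_{BV(B)} = ‖f‖_{L¹(μ|_B)} + |Df|_B(B)`. -/
noncomputable def bvNorm (μ : Measure X) (B : Set X) (f : X → ℝ) : ℝ≥0∞ :=
  (∫⁻ x in B, ENNReal.ofReal |f x| ∂μ) + totVar (μ.restrict B) f B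

/-- `B` is a `BV`-extension set. -/
def IsBVExtensionSet (μ : Measure X) (B : Set X) : Prop :=
  ∃ C : ℝ, 0 < C ∧ ∀ f : X → ℝ, MemBV μ B f →
    ∃ g : X → ℝ, MemBV μ univ g ∧ EqOn g f B ∧
      bvNorm μ univ g ≤ ENNReal.ofReal C * bvNorm μ B f

/-- The functional `M_λ(A) = Per(A) + λ m(Ω \ A)`. -/
noncomputable def Mfun (μ : Measure X) (Ω : Set X) (lam : ℝ) (A : Set X) : ℝ≥0∞ :=
  per μ A + ENNReal.ofReal lam * μ (Ω \ A)
/-- The Euclidean plane `ℝ²`. -/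
noncomputable abbrev Plane : Type := EuclideanSpace ℝ (Fin 2)

/-- The point `(a, b) ∈ ℝ²`. -/
noncomputable def pt (a b : ℝ) : Plane := WithLp.toLp 2 ![a, b]

/-- The model triangle `T = {(x,y) : y ≥ 0, y < x < 1 - y}`. -/
def Ttri : Set Plane := {p | 0 ≤ p 1 ∧ p 1 < p 0 ∧ p 0 < 1 - p 1}

/-- The triangle `c·T + (a, 0)`. -/
noncomputable def triAt (c a : ℝ) : Set Plane :=
  (fun p : Plane => pt (c * p 0 + a) (c * p 1)) '' Ttri

/-- The triangle `T_n = 2^{-2n+1}·T + (2^{-2n+1}, 0)`. -/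
noncomputable def Tn (n : ℕ) : Set Plane :=
  triAt ((2:ℝ) ^ (1 - 2 * (n:ℤ))) ((2:ℝ) ^ (1 - 2 * (n:ℤ)))

/-- The square `Q = (0,1) × (−1,0)`. -/
def Qset : Set Plane := {p | p 0 ∈ Ioo (0:ℝ) 1 ∧ p 1 ∈ Ioo (-1:ℝ) 0}

/-- The domain `Ω = Q ∪ ⋃_{n ≥ 1} T_n`. -/
noncomputable def Ωset : Set Plane := Qset ∪ ⋃ n : ℕ, Tn (n + 1)

/-- The center `x_n = (2^{-2n+1} + 2^{-2n}, 0)` of the base of `T_n`. -/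
noncomputable def xpt (n : ℕ) : Plane :=
  pt ((2:ℝ) ^ (1 - 2 * (n:ℤ)) + (2:ℝ) ^ (-2 * (n:ℤ))) 0

/-- The weight `w`. -/
noncomputable def wfun (p : Plane) : ℝ≥0∞ :=
  if p 1 ∈ Icc (-1:ℝ) 0 then
    ENNReal.ofReal (min 1 (infDist p {q : Plane | q 1 = -1 ∨ q 1 = 0}))
  else 1

/-- The weighted measure `m = w·L² + Σ_{n ≥ 1} 2^{-n} δ_{x_n}`. -/
noncomputable def mws : Measure Plane :=
  volume.withDensity wfun +
    Measure.sum fun k : ℕ => ((2:ℝ≥0∞) ^ (k + 1))⁻¹ • Measure.dirac (xpt (k + 1))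

/-- The closed upper half-plane `H = ℝ × [0, ∞)`. -/
def Hup : Set Plane := {p | 0 ≤ p 1}


/-! ### lipa tools -/

section LipaTools
variable {X : Type*} [PseudoMetricSpace X] [MeasurableSpace X]

noncomputable def Sball (f : X → ℝ) (x : X) (r : ℝ) : ℝ≥0∞ :=
  ⨆ (y : X) (_ : y ∈ ball x r) (z : X) (_ : z ∈ ball x r), edist (f y) (f z) / edist y z

lemma lipa_eq_iInf (f : X → ℝ) (x : X) : lipa f x = ⨅ (r : ℝ) (_ : 0 < r), Sball f x r := rfl

lemma Sball_le_of_pair (f : X → ℝ) (x : X) (r : ℝ) {M : ℝ≥0∞}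
    (h : ∀ y ∈ ball x r, ∀ z ∈ ball x r, edist (f y) (f z) / edist y z ≤ M) :
    Sball f x r ≤ M :=
  iSup₂_le fun y hy => iSup₂_le fun z hz => h y hy z hz

lemma pair_le_Sball (f : X → ℝ) (x : X) (r : ℝ) {y z : X} (hy : y ∈ ball x r) (hz : z ∈ ball x r) :
    edist (f y) (f z) / edist y z ≤ Sball f x r :=
  le_iSup₂_of_le y hy (le_iSup₂_of_le z hz le_rfl)

lemma Sball_mono (f : X → ℝ) (x : X) {r r' : ℝ} (h : r ≤ r') : Sball f x r ≤ Sball f x r' :=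
  Sball_le_of_pair f x r fun y hy z hz =>
    pair_le_Sball f x r' (ball_subset_ball h hy) (ball_subset_ball h hz)

lemma lipa_le_Sball (f : X → ℝ) (x : X) {r : ℝ} (hr : 0 < r) : lipa f x ≤ Sball f x r := by
  rw [lipa_eq_iInf]; exact iInf₂_le r hr

lemma Sball_congr {f g : X → ℝ} {x : X} {r r' : ℝ} (h : EqOn f g (ball x r)) (hle : r' ≤ r) :
    Sball f x r' = Sball g x r' := by
  have : ∀ (F G : X → ℝ), EqOn F G (ball x r) → Sball F x r' ≤ Sball G x r' := by
    intro F G hFG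
    refine Sball_le_of_pair _ _ _ fun y hy z hz => ?_
    rw [hFG (ball_subset_ball hle hy), hFG (ball_subset_ball hle hz)]
    exact pair_le_Sball _ _ _ hy hz
  exact le_antisymm (this f g h) (this g f fun p hp => (h hp).symm)

lemma lipa_le_of_eqOn {f g : X → ℝ} {x : X} {r : ℝ} (h : EqOn f g (ball x r)) (hr : 0 < r) :
    lipa f x ≤ lipa g x := by
  rw [lipa_eq_iInf g]
  refine le_iInf₂ fun r' hr' => ?_
  calc lipa f x ≤ Sball f x (min r r') := lipa_le_Sball f x (lt_min hr hr')
    _ = Sball g x (min r r') := Sball_congr h (min_le_left _ _)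
    _ ≤ Sball g x r' := Sball_mono g x (min_le_right _ _)

lemma lipa_const (c : ℝ) (x : X) : lipa (fun _ => c) x = 0 := by
  refine le_antisymm ?_ zero_le
  refine (lipa_le_Sball _ x one_pos).trans ?_
  refine Sball_le_of_pair _ _ _ fun y _ z _ => ?_
  simp [edist_self]

lemma lipa_comp_le {φ : ℝ → ℝ} (hφ : ∀ a b : ℝ, |φ a - φ b| ≤ |a - b|) (f : X → ℝ) (x : X) :
    lipa (fun p => φ (f p)) x ≤ lipa f x := by
  rw [lipa_eq_iInf f]
  refine le_iInf₂ fun r hr => ?_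
  refine (lipa_le_Sball _ x hr).trans ?_
  refine Sball_le_of_pair _ _ _ fun y hy z hz => ?_
  refine le_trans (ENNReal.div_le_div_right ?_ _) (pair_le_Sball f x r hy hz)
  rw [edist_dist, edist_dist, Real.dist_eq, Real.dist_eq]
  exact ENNReal.ofReal_le_ofReal (hφ _ _)

lemma mul_diff_bound {a b c d : ℝ} (ha : |a| ≤ 1) (hd : |d| ≤ 1) :
    |a * b - c * d| ≤ |b - d| + |a - c| := by
  have h : a * b - c * d = a * (b - d) + (a - c) * d := by ring
  rw [h]
  refine (abs_add_le _ _).trans ?_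
  rw [abs_mul, abs_mul]
  nlinarith [abs_nonneg (b - d), abs_nonneg (a - c), abs_nonneg a, abs_nonneg d]

lemma lipa_mul_cutoff {Y : Type*} [MetricSpace Y] [MeasurableSpace Y]
    {η G : Y → ℝ} (hη : ∀ p, η p ∈ Icc (0:ℝ) 1) (hG : ∀ p, G p ∈ Icc (0:ℝ) 1)
    {K : ℝ≥0} (hK : LipschitzWith K η) (x : Y) :
    lipa (fun p => η p * G p) x ≤ lipa G x + K := by
  have key : ∀ r : ℝ, Sball (fun p => η p * G p) x r ≤ Sball G x r + K := by
    intro r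
    refine Sball_le_of_pair _ _ _ fun y hy z hz => ?_
    rcases eq_or_ne y z with rfl | hyz
    · simp [edist_self]
    · have hd : edist y z ≠ 0 := by simpa [edist_eq_zero] using hyz
      have hdt : edist y z ≠ ⊤ := edist_ne_top y z
      have habs : |η y * G y - η z * G z| ≤ |G y - G z| + |η y - η z| :=
        mul_diff_bound (abs_le.2 ⟨by linarith [(hη y).1], (hη y).2⟩)
          (abs_le.2 ⟨by linarith [(hG z).1], (hG z).2⟩)
      have hedist : edist (η y * G y) (η z * G z) ≤ edist (G y) (G z) + K * edist y z := by
        rw [edist_dist, edist_dist, Real.dist_eq, Real.dist_eq]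
        calc ENNReal.ofReal |η y * G y - η z * G z|
            ≤ ENNReal.ofReal (|G y - G z| + |η y - η z|) := ENNReal.ofReal_le_ofReal habs
          _ ≤ ENNReal.ofReal |G y - G z| + ENNReal.ofReal |η y - η z| := ENNReal.ofReal_add_le
          _ ≤ ENNReal.ofReal |G y - G z| + K * edist y z := by
              gcongr
              have := hK.edist_le_mul y z
              rwa [edist_dist, Real.dist_eq] at this
      calc edist (η y * G y) (η z * G z) / edist y z
          ≤ (edist (G y) (G z) + K * edist y z) / edist y z :=
            ENNReal.div_le_div_right hedist _
        _ ≤ edist (G y) (G z) / edist y z + (K * edist y z) / edist y z := by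
            rw [ENNReal.add_div]
        _ ≤ Sball G x r + K := by
            gcongr
            · exact pair_le_Sball G x r hy hz
            · rw [mul_div_assoc]
              calc (K : ℝ≥0∞) * (edist y z / edist y z) ≤ K * 1 := by
                    gcongr; exact ENNReal.div_self_le_one
                _ = K := mul_one _
  rw [lipa_eq_iInf (fun p => η p * G p)]
  have h1 : (⨅ (r : ℝ) (_ : 0 < r), Sball (fun p => η p * G p) x r)
      ≤ ⨅ (r : ℝ) (_ : 0 < r), (Sball G x r + K) := by
    refine le_iInf₂ fun r hr => (iInf₂_le r hr).trans (key r)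
  refine h1.trans ?_
  have h2 : (⨅ (r : ℝ) (_ : 0 < r), (Sball G x r + K)) = (⨅ (r : ℝ) (_ : 0 < r), Sball G x r) + K := by
    rw [iInf_subtype', iInf_subtype', ENNReal.iInf_add]
  rw [h2, lipa_eq_iInf]

end LipaTools

/-! ### coordinate and clamp tools -/

lemma pt_zero (a b : ℝ) : pt a b 0 = a := rfl
lemma pt_one (a b : ℝ) : pt a b 1 = b := rfl

lemma coord_dist (p q : Plane) (i : Fin 2) : |p i - q i| ≤ dist p q := by
  rw [EuclideanSpace.dist_eq]
  have h1 : |p i - q i| = Real.sqrt (dist (p i) (q i) ^ 2) := by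
    rw [Real.sqrt_sq_eq_abs, Real.dist_eq, abs_abs]
  rw [h1]
  apply Real.sqrt_le_sqrt
  exact Finset.single_le_sum (fun j _ => sq_nonneg (dist (p j) (q j))) (Finset.mem_univ i)

lemma coord_lipschitz (i : Fin 2) : LipschitzWith 1 (fun p : Plane => p i) := by
  apply LipschitzWith.of_dist_le_mul
  intro p q
  rw [Real.dist_eq]
  calc |p i - q i| ≤ dist p q := coord_dist p q i
    _ = (1:ℝ≥0) * dist p q := by norm_num

lemma coord_measurable (i : Fin 2) : Measurable (fun p : Plane => p i) :=
  (coord_lipschitz i).continuous.measurable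

noncomputable def clampR (t : ℝ) : ℝ := max 0 (min t 1)

lemma clampR_mem (t : ℝ) : clampR t ∈ Icc (0:ℝ) 1 :=
  ⟨le_max_left _ _, max_le (by norm_num) (min_le_right _ _)⟩

lemma min1_abs (a b : ℝ) : |min a 1 - min b 1| ≤ |a - b| := by
  rw [abs_sub_le_iff]
  constructor <;> rcases le_total a 1 with h1|h1 <;> rcases le_total b 1 with h2|h2 <;>
    simp [min_eq_left, min_eq_right, h1, h2] <;>
    nlinarith [le_abs_self (a-b), neg_abs_le (a-b)]

lemma clampR_abs (a b : ℝ) : |clampR a - clampR b| ≤ |a - b| := by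
  have h1 : |clampR a - clampR b| ≤ |min a 1 - min b 1| := by
    unfold clampR
    rw [max_comm 0 (min a 1), max_comm 0 (min b 1)]
    exact abs_max_sub_max_le_abs _ _ _
  exact h1.trans (min1_abs a b)

lemma clampR_of_mem {t : ℝ} (h : t ∈ Icc (0:ℝ) 1) : clampR t = t := by
  unfold clampR
  rw [min_eq_left h.2, max_eq_right h.1]

lemma indicator_mem_Icc (E : Set Plane) (p : Plane) : E.indicator (1 : Plane → ℝ) p ∈ Icc (0:ℝ) 1 := by
  by_cases h : p ∈ E <;> simp [Set.indicator_apply, h]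

lemma clampR_indicator (E : Set Plane) (p : Plane) :
    clampR (E.indicator (1 : Plane → ℝ) p) = E.indicator 1 p :=
  clampR_of_mem (indicator_mem_Icc E p)

/-- affine function of the second coordinate is Lipschitz -/
lemma affine_coord_lipschitz (a b : ℝ) :
    LipschitzWith (Real.toNNReal |a|) (fun p : Plane => a * p 1 + b) := by
  apply LipschitzWith.of_dist_le_mul
  intro p q
  rw [Real.dist_eq]
  have : a * p 1 + b - (a * q 1 + b) = a * (p 1 - q 1) := by ring
  rw [this, abs_mul, Real.coe_toNNReal _ (abs_nonneg a)]
  exact mul_le_mul_of_nonneg_left (coord_dist p q 1) (abs_nonneg a)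

/-! ### wfun and mws estimates -/

lemma wfun_le_one (p : Plane) : wfun p ≤ 1 := by
  unfold wfun
  split_ifs
  · calc ENNReal.ofReal (min 1 (infDist p {q : Plane | q 1 = -1 ∨ q 1 = 0}))
        ≤ ENNReal.ofReal 1 := ENNReal.ofReal_le_ofReal (min_le_left _ _)
      _ = 1 := ENNReal.ofReal_one
  · exact le_rfl

lemma wfun_lt_top (p : Plane) : wfun p < ⊤ := lt_of_le_of_lt (wfun_le_one p) (by norm_num)

lemma wfun_measurable : Measurable wfun := by
  unfold wfun
  apply Measurable.ite
  · have : {p : Plane | p 1 ∈ Icc (-1:ℝ) 0} = (fun p : Plane => p 1) ⁻¹' (Icc (-1) 0) := rfl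
    exact (coord_measurable 1) measurableSet_Icc
  · apply Measurable.ennreal_ofReal
    exact (continuous_const.min (continuous_infDist_pt _)).measurable
  · exact measurable_const

lemma wfun_le_strip {p : Plane} {s : ℝ} (hs : s ≤ 1/2) (h1 : -s ≤ p 1) (h2 : p 1 ≤ 0) :
    wfun p ≤ ENNReal.ofReal s := by
  have hs0 : 0 ≤ s := by nlinarith
  have hmem : p 1 ∈ Icc (-1:ℝ) 0 := ⟨by linarith, h2⟩
  unfold wfun
  rw [if_pos hmem]
  apply ENNReal.ofReal_le_ofReal
  have hd : infDist p {q : Plane | q 1 = -1 ∨ q 1 = 0} ≤ dist p (pt (p 0) 0) := by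
    apply infDist_le_dist_of_mem
    right
    exact pt_one _ _
  have hdist : dist p (pt (p 0) 0) = |p 1| := by
    rw [EuclideanSpace.dist_eq, Fin.sum_univ_two]
    rw [Real.dist_eq, Real.dist_eq, pt_zero, pt_one, sub_self, abs_zero, sub_zero]
    rw [← Real.sqrt_sq_eq_abs]
    norm_num
  have : |p 1| ≤ s := by rw [abs_le]; constructor <;> linarith
  calc min 1 (infDist p {q : Plane | q 1 = -1 ∨ q 1 = 0}) ≤ infDist p _ := min_le_right _ _
    _ ≤ |p 1| := by rw [← hdist]; exact hd
    _ ≤ s := this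

lemma xpt_one (n : ℕ) : xpt n 1 = 0 := rfl

lemma mws_apply_le_density {T : Set Plane} (hT : MeasurableSet T) (hsub : T ⊆ {p : Plane | p 1 < 0}) :
    mws T = ∫⁻ p in T, wfun p ∂volume := by
  unfold mws
  rw [Measure.add_apply, Measure.sum_apply _ hT]
  have hz : ∀ k : ℕ, (((2:ℝ≥0∞) ^ (k + 1))⁻¹ • Measure.dirac (xpt (k + 1))) T = 0 := by
    intro k
    rw [Measure.smul_apply, Measure.dirac_apply' _ hT]
    have : xpt (k+1) ∉ T := by
      intro hmem
      have := hsub hmem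
      simp only [mem_setOf_eq, xpt_one] at this
      linarith
    simp [Set.indicator_apply, this]
  simp only [hz, tsum_zero, add_zero]
  rw [withDensity_apply _ hT]

lemma vol_rect {I J : Set ℝ} (hI : MeasurableSet I) (hJ : MeasurableSet J) :
    volume {p : Plane | p 0 ∈ I ∧ p 1 ∈ J} = volume I * volume J := by
  have e := EuclideanSpace.volume_preserving_symm_measurableEquiv_toLp (Fin 2)
  set T : Set (Fin 2 → ℝ) := Set.pi univ (fun i => if i = 0 then I else J) with hTdef
  have hTm : MeasurableSet T := MeasurableSet.univ_pi (fun i => by by_cases h : i = 0 <;> simp [h, hI, hJ])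
  have hpre : (⇑(MeasurableEquiv.toLp 2 (Fin 2 → ℝ)).symm) ⁻¹' T = {p : Plane | p 0 ∈ I ∧ p 1 ∈ J} := by
    ext p
    simp only [Set.mem_preimage, hTdef, Set.mem_univ_pi, mem_setOf_eq]
    rw [Fin.forall_fin_two]
    exact Iff.rfl
  rw [← hpre, e.measure_preimage hTm.nullMeasurableSet]
  rw [hTdef, volume_pi_pi, Fin.prod_univ_two]
  simp

lemma mws_rect_le {I J : Set ℝ} (hI : MeasurableSet I) (hJ : MeasurableSet J) {s : ℝ}
    (hs : s ≤ 1/2) (hJs : J ⊆ Ico (-s) 0) :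
    mws {p : Plane | p 0 ∈ I ∧ p 1 ∈ J} ≤ ENNReal.ofReal s * (volume I * volume J) := by
  set T := {p : Plane | p 0 ∈ I ∧ p 1 ∈ J} with hTdef
  have hTm : MeasurableSet T :=
    ((coord_measurable 0) hI).inter ((coord_measurable 1) hJ)
  have hsub : T ⊆ {p : Plane | p 1 < 0} := fun p hp => (hJs hp.2).2
  rw [mws_apply_le_density hTm hsub]
  calc ∫⁻ p in T, wfun p ∂volume ≤ ∫⁻ _ in T, ENNReal.ofReal s ∂volume := by
        apply lintegral_mono_ae
        filter_upwards [ae_restrict_mem hTm] with p hp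
        exact wfun_le_strip hs (hJs hp.2).1 (hJs hp.2).2.le
    _ = ENNReal.ofReal s * volume T := setLIntegral_const T _
    _ = ENNReal.ofReal s * (volume I * volume J) := by rw [hTdef, vol_rect hI hJ]

/-! ### the open sliver set -/

def Uset (c : ℝ) : Set Plane := {p | -c / (1 + (p 0)^2) < p 1}

lemma Uset_open (c : ℝ) : IsOpen (Uset c) := by
  have h1 : Continuous fun p : Plane => -c / (1 + (p 0)^2) := by
    apply Continuous.div continuous_const
    · exact continuous_const.add (((coord_lipschitz 0).continuous).pow 2)
    · intro p; nlinarith [sq_nonneg (p 0)]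
  exact isOpen_lt h1 (coord_lipschitz 1).continuous

lemma Hup_subset_Uset {c : ℝ} (hc : 0 < c) : Hup ⊆ Uset c := by
  intro p hp
  have h2 : (0:ℝ) < 1 + (p 0)^2 := by nlinarith [sq_nonneg (p 0)]
  have : -c / (1 + (p 0)^2) < 0 := div_neg_of_neg_of_pos (by linarith) h2
  exact lt_of_lt_of_le this hp

lemma Uset_y_gt {c : ℝ} (hc : 0 < c) {p : Plane} (hp : p ∈ Uset c) : -c < p 1 := by
  have h2 : (0:ℝ) < 1 + (p 0)^2 := by nlinarith [sq_nonneg (p 0)]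
  have h3 : c / (1 + (p 0)^2) ≤ c := div_le_self hc.le (by nlinarith [sq_nonneg (p 0)])
  have h4 : -c ≤ -c / (1 + (p 0)^2) := by rw [neg_div]; linarith
  exact lt_of_le_of_lt h4 hp

lemma Uset_x_bound {c δ : ℝ} (hc : 0 < c) (hδ : 0 < δ) {p : Plane}
    (hp : p ∈ Uset c) (hy : p 1 ≤ -(δ/2)) : |p 0| ≤ Real.sqrt (2*c/δ) := by
  have h2 : (0:ℝ) < 1 + (p 0)^2 := by nlinarith [sq_nonneg (p 0)]
  have h1 : -c / (1 + (p 0)^2) < -(δ/2) := lt_of_lt_of_le hp hy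
  have h3 : (p 0)^2 ≤ 2*c/δ := by
    rw [div_lt_iff₀ h2] at h1
    rw [le_div_iff₀ hδ]
    nlinarith
  calc |p 0| = Real.sqrt ((p 0)^2) := (Real.sqrt_sq_eq_abs _).symm
    _ ≤ Real.sqrt (2*c/δ) := Real.sqrt_le_sqrt h3

lemma band_cost_mul {c δ : ℝ} (hc : 0 < c) (hδ : 0 < δ) (hδc : δ ≤ c) (hc2 : c ≤ 1/8) :
    ENNReal.ofReal (8/δ) * mws (Uset c ∩ {p : Plane | -δ ≤ p 1 ∧ p 1 ≤ -(δ/2)}) ≤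
      ENNReal.ofReal (8 * Real.sqrt (2*c) * Real.sqrt δ) := by
  set X := Real.sqrt (2*c/δ) with hX
  have hX0 : 0 ≤ X := Real.sqrt_nonneg _
  have hsub : Uset c ∩ {p : Plane | -δ ≤ p 1 ∧ p 1 ≤ -(δ/2)} ⊆
      {p : Plane | p 0 ∈ Icc (-X) X ∧ p 1 ∈ Icc (-δ) (-(δ/2))} := by
    rintro p ⟨hpU, hp1, hp2⟩
    exact ⟨abs_le.1 (Uset_x_bound hc hδ hpU hp2), hp1, hp2⟩
  have hrect := mws_rect_le (I := Icc (-X) X) (J := Icc (-δ) (-(δ/2))) (measurableSet_Icc)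
      (measurableSet_Icc) (s := δ) (by linarith)
      (fun t ht => ⟨ht.1, lt_of_le_of_lt ht.2 (by linarith)⟩)
  have hle := (measure_mono hsub).trans hrect
  calc ENNReal.ofReal (8/δ) * mws (Uset c ∩ {p : Plane | -δ ≤ p 1 ∧ p 1 ≤ -(δ/2)})
      ≤ ENNReal.ofReal (8/δ) * (ENNReal.ofReal δ * (volume (Icc (-X) X) * volume (Icc (-δ) (-(δ/2))))) := by
        exact mul_le_mul_right hle _
    _ = ENNReal.ofReal (8/δ * (δ * ((X - -X) * (-(δ/2) - -δ)))) := by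
        rw [Real.volume_Icc, Real.volume_Icc]
        rw [← ENNReal.ofReal_mul (by linarith), ← ENNReal.ofReal_mul (by linarith),
          ← ENNReal.ofReal_mul (by positivity)]
    _ ≤ ENNReal.ofReal (8 * Real.sqrt (2*c) * Real.sqrt δ) := by
        apply ENNReal.ofReal_le_ofReal
        have h4 : X * δ = Real.sqrt (2*c) * Real.sqrt δ := by
          rw [hX, Real.sqrt_div (by positivity), div_mul_eq_mul_div, mul_div_assoc,
            Real.div_sqrt]
        have h5 : 8/δ * (δ * ((X - -X) * (-(δ/2) - -δ))) = 8*(X*δ) := by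
          field_simp
          ring
        rw [h5, h4]
        linarith [Real.sqrt_nonneg (2*c), Real.sqrt_nonneg δ]

lemma strip_ball_cost {R s : ℝ} (hR : 0 ≤ R) (hs : 0 < s) (hs2 : s ≤ 1/2) :
    mws (closedBall (0:Plane) R ∩ {p : Plane | -s < p 1 ∧ p 1 < 0}) ≤
      ENNReal.ofReal (s * (2*R) * s) := by
  have hsub : closedBall (0:Plane) R ∩ {p : Plane | -s < p 1 ∧ p 1 < 0} ⊆
      {p : Plane | p 0 ∈ Icc (-R) R ∧ p 1 ∈ Ioo (-s) 0} := by
    rintro p ⟨hpb, hp1, hp2⟩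
    constructor
    · have h0 : |p 0 - (0:Plane) 0| ≤ dist p 0 := coord_dist p 0 0
      have : (0:Plane) 0 = 0 := rfl
      rw [this, sub_zero] at h0
      exact abs_le.1 (h0.trans (mem_closedBall.1 hpb))
    · exact ⟨hp1, hp2⟩
  have hrect := mws_rect_le (I := Icc (-R) R) (J := Ioo (-s) 0) (measurableSet_Icc)
      (measurableSet_Ioo) (s := s) hs2 (fun t ht => ⟨ht.1.le, ht.2⟩)
  refine (measure_mono hsub).trans (hrect.trans ?_)
  rw [Real.volume_Icc, Real.volume_Ioo]
  rw [← ENNReal.ofReal_mul (by linarith), ← ENNReal.ofReal_mul (by positivity)]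
  apply ENNReal.ofReal_le_ofReal
  nlinarith

/-! ### strips and splitting -/

def StripS (s : ℝ) : Set Plane := {p | -s < p 1 ∧ p 1 < 0}
def DownS (c d : ℝ) : Set Plane := {p | -c < p 1 ∧ p 1 ≤ -d}

lemma StripS_meas (s : ℝ) : MeasurableSet (StripS s) :=
  ((coord_measurable 1) measurableSet_Ioi).inter ((coord_measurable 1) measurableSet_Iio)

lemma DownS_meas (c d : ℝ) : MeasurableSet (DownS c d) :=
  ((coord_measurable 1) measurableSet_Ioi).inter ((coord_measurable 1) measurableSet_Iic)

lemma strip_split (μ : Measure Plane) (f : Plane → ℝ≥0∞) {c d : ℝ} (hd : 0 < d) (hdc : d ≤ c) :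
    ∫⁻ p in StripS c, f p ∂μ = ∫⁻ p in StripS d, f p ∂μ + ∫⁻ p in DownS c d, f p ∂μ := by
  have hset : StripS c = StripS d ∪ DownS c d := by
    ext p
    constructor
    · rintro ⟨h1, h2⟩
      rcases le_or_gt (p 1) (-d) with h | h
      · exact Or.inr ⟨h1, h⟩
      · exact Or.inl ⟨h, h2⟩
    · rintro (⟨h1, h2⟩ | ⟨h1, h2⟩)
      · exact ⟨by linarith, h2⟩
      · exact ⟨h1, by linarith⟩
  have hdisj : Disjoint (StripS d) (DownS c d) := by
    rw [Set.disjoint_left]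
    rintro p ⟨h1, _⟩ ⟨_, h2⟩
    exact absurd h1 (by push_neg; linarith)
  rw [hset, Measure.restrict_union hdisj (DownS_meas _ _), lintegral_add_measure]

/-! ### filter helpers -/

lemma myLiminf_add_const (a : ℕ → ℝ≥0∞) (c : ℝ≥0∞) :
    atTop.liminf (fun n => a n + c) = atTop.liminf a + c := by
  rw [liminf_eq_iSup_iInf_of_nat, liminf_eq_iSup_iInf_of_nat, ENNReal.iSup_add]
  congr 1
  funext n
  rw [ENNReal.iInf_add]
  congr 1
  funext i
  rw [ENNReal.iInf_add]

lemma liminf_le_add_of_tendsto {E G : ℕ → ℝ≥0∞} {B : ℝ≥0∞} {τ : ℕ → ℝ≥0∞}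
    (hτ : Tendsto τ atTop (𝓝 0)) (h : ∀ᶠ n in atTop, E n ≤ G n + B + τ n) :
    atTop.liminf E ≤ atTop.liminf G + B := by
  refine ENNReal.le_of_forall_pos_le_add fun ε hε hfin => ?_
  have hev : ∀ᶠ n in atTop, τ n < (ε : ℝ≥0∞) := by
    refine hτ.eventually_lt_const ?_
    exact_mod_cast ENNReal.coe_pos.2 hε
  have h2 : ∀ᶠ n in atTop, E n ≤ G n + (B + ε) := by
    filter_upwards [h, hev] with n h1 h2
    calc E n ≤ G n + B + τ n := h1
      _ ≤ G n + B + ε := add_le_add_right h2.le (G n + B)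
      _ = G n + (B + ε) := by rw [add_assoc]
  calc atTop.liminf E ≤ atTop.liminf (fun n => G n + (B + ε)) := liminf_le_liminf h2
    _ = atTop.liminf G + (B + ε) := myLiminf_add_const _ _
    _ = atTop.liminf G + B + ε := by rw [add_assoc]

lemma exists_strictMono_forall {P : ℕ → ℕ → Prop} (h : ∀ n m : ℕ, ∃ j, m ≤ j ∧ P n j) :
    ∃ φ : ℕ → ℕ, StrictMono φ ∧ ∀ n, P n (φ n) := by
  choose gg hg1 hg2 using h
  set φ : ℕ → ℕ := fun n => Nat.rec (gg 0 0) (fun n ih => gg (n+1) (ih+1)) n with hφ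
  have hstep : ∀ n, φ (n+1) = gg (n+1) (φ n + 1) := fun n => rfl
  refine ⟨φ, strictMono_nat_of_lt_succ fun n => ?_, fun n => ?_⟩
  · rw [hstep]
    exact lt_of_lt_of_le (Nat.lt_succ_self _) (hg1 (n+1) (φ n + 1))
  · cases n with
    | zero => exact hg2 0 0
    | succ m => rw [hstep]; exact hg2 (m+1) (φ m + 1)

lemma myEventually_liminf_le {a : ℕ → ℝ≥0∞} {ε : ℝ≥0∞} (hfin : atTop.liminf a ≠ ⊤)
    (hε : 0 < ε) (hεt : ε ≠ ⊤) :
    ∀ᶠ j in atTop, atTop.liminf a ≤ a j + ε := by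
  set l := atTop.liminf a with hl
  rcases eq_or_ne l 0 with h0 | h0
  · simp [h0]
  by_contra hc
  rw [Filter.not_eventually] at hc
  have hfreq : ∃ᶠ j in atTop, a j ≤ l - ε := by
    refine hc.mono fun j hj => ?_
    push_neg at hj
    have h1 : a j + ε ≤ l := hj.le
    exact ENNReal.le_sub_of_add_le_right hεt h1
  have := liminf_le_of_frequently_le hfreq
  rw [← hl] at this
  have hlt : l - ε < l := ENNReal.sub_lt_self hfin h0 hε.ne'
  exact absurd (lt_of_le_of_lt this hlt) (lt_irrefl _)

lemma frequently_le_liminf_add {a : ℕ → ℝ≥0∞} {ε : ℝ≥0∞} (hfin : atTop.liminf a ≠ ⊤)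
    (hε : 0 < ε) :
    ∃ᶠ j in atTop, a j ≤ atTop.liminf a + ε := by
  have hlt : atTop.liminf a < atTop.liminf a + ε :=
    ENNReal.lt_add_right hfin hε.ne'
  exact (frequently_lt_of_liminf_lt (by isBoundedDefault) hlt).mono fun j hj => hj.le

/-! ### Lipschitz combination -/

lemma clampR_lipschitzWith : LipschitzWith 1 clampR := by
  apply LipschitzWith.of_dist_le_mul
  intro a b
  rw [Real.dist_eq, Real.dist_eq]
  calc |clampR a - clampR b| ≤ |a - b| := clampR_abs a b
    _ = (1:ℝ≥0) * |a - b| := by norm_num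

lemma lipOnWith_comb {s : Set Plane} {G V η ζ : Plane → ℝ} {K1 K2 Kc : ℝ≥0}
    (hG : LipschitzOnWith K1 G s) (hV : LipschitzOnWith K2 V s)
    (hGr : ∀ p, G p ∈ Icc (0:ℝ) 1) (hVr : ∀ p, V p ∈ Icc (0:ℝ) 1)
    (hη : LipschitzWith Kc η) (hζ : LipschitzWith Kc ζ)
    (hηr : ∀ p, η p ∈ Icc (0:ℝ) 1) (hζr : ∀ p, ζ p ∈ Icc (0:ℝ) 1) :
    LipschitzOnWith (Kc + K1 + (Kc + K2)) (fun p => η p * G p + ζ p * V p) s := by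
  rw [lipschitzOnWith_iff_dist_le_mul]
  intro y hy z hz
  rw [Real.dist_eq]
  have hd1 : |η y * G y - η z * G z| ≤ |G y - G z| + |η y - η z| :=
    mul_diff_bound (abs_le.2 ⟨by linarith [(hηr y).1], (hηr y).2⟩)
      (abs_le.2 ⟨by linarith [(hGr z).1], (hGr z).2⟩)
  have hd2 : |ζ y * V y - ζ z * V z| ≤ |V y - V z| + |ζ y - ζ z| :=
    mul_diff_bound (abs_le.2 ⟨by linarith [(hζr y).1], (hζr y).2⟩)
      (abs_le.2 ⟨by linarith [(hVr z).1], (hVr z).2⟩)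
  have hG' : |G y - G z| ≤ K1 * dist y z := by
    have := hG.dist_le_mul y hy z hz
    rwa [Real.dist_eq] at this
  have hV' : |V y - V z| ≤ K2 * dist y z := by
    have := hV.dist_le_mul y hy z hz
    rwa [Real.dist_eq] at this
  have hη' : |η y - η z| ≤ Kc * dist y z := by
    have := hη.dist_le_mul y z
    rwa [Real.dist_eq] at this
  have hζ' : |ζ y - ζ z| ≤ Kc * dist y z := by
    have := hζ.dist_le_mul y z
    rwa [Real.dist_eq] at this
  have habs : |η y * G y + ζ y * V y - (η z * G z + ζ z * V z)| ≤
      |η y * G y - η z * G z| + |ζ y * V y - ζ z * V z| := by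
    have : η y * G y + ζ y * V y - (η z * G z + ζ z * V z) =
        (η y * G y - η z * G z) + (ζ y * V y - ζ z * V z) := by ring
    rw [this]
    exact abs_add_le _ _
  push_cast
  nlinarith [dist_nonneg (x := y) (y := z)]

/-! ### cutoff functions -/

lemma clampR_eq_one {t : ℝ} (h : 1 ≤ t) : clampR t = 1 := by
  unfold clampR; rw [min_eq_right h, max_eq_right (by norm_num)]

lemma clampR_eq_zero {t : ℝ} (h : t ≤ 0) : clampR t = 0 := by
  unfold clampR; rw [max_eq_left]; exact min_le_of_left_le h

noncomputable def ηc (δ : ℝ) (p : Plane) : ℝ := clampR ((8/δ) * p 1 + 5)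
noncomputable def ζc (δ : ℝ) (p : Plane) : ℝ := clampR (-(8/δ) * p 1 - 7)

lemma ηc_mem (δ : ℝ) (p : Plane) : ηc δ p ∈ Icc (0:ℝ) 1 := clampR_mem _
lemma ζc_mem (δ : ℝ) (p : Plane) : ζc δ p ∈ Icc (0:ℝ) 1 := clampR_mem _

lemma ηc_lips {δ : ℝ} (hδ : 0 < δ) : LipschitzWith (Real.toNNReal (8/δ)) (ηc δ) := by
  have h := clampR_lipschitzWith.comp (affine_coord_lipschitz (8/δ) 5)
  rwa [one_mul, abs_of_pos (by positivity)] at h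

lemma ζc_lips {δ : ℝ} (hδ : 0 < δ) : LipschitzWith (Real.toNNReal (8/δ)) (ζc δ) := by
  have h := clampR_lipschitzWith.comp (affine_coord_lipschitz (-(8/δ)) (-7))
  have habs : |(-(8/δ))| = 8/δ := by rw [abs_neg, abs_of_pos (by positivity)]
  rw [one_mul, habs] at h
  have : (fun p : Plane => clampR (-(8/δ) * p 1 + -7)) = ζc δ := by
    funext p; unfold ζc; ring_nf
  rwa [Function.comp_def, this] at h

lemma ηc_one {δ : ℝ} (hδ : 0 < δ) {p : Plane} (h : -(δ/2) ≤ p 1) : ηc δ p = 1 := by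
  apply clampR_eq_one
  have h8 : (0:ℝ) < 8/δ := by positivity
  have : (8/δ) * (-(δ/2)) ≤ (8/δ) * p 1 := by gcongr
  have heq : (8/δ) * (-(δ/2)) = -4 := by field_simp; ring
  linarith [heq ▸ this]

lemma ηc_zero {δ : ℝ} (hδ : 0 < δ) {p : Plane} (h : p 1 ≤ -(5/8*δ)) : ηc δ p = 0 := by
  apply clampR_eq_zero
  have h8 : (0:ℝ) < 8/δ := by positivity
  have : (8/δ) * p 1 ≤ (8/δ) * (-(5/8*δ)) := by gcongr
  have heq : (8/δ) * (-(5/8*δ)) = -5 := by field_simp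
  linarith [heq ▸ this]

lemma ζc_zero {δ : ℝ} (hδ : 0 < δ) {p : Plane} (h : -(7/8*δ) ≤ p 1) : ζc δ p = 0 := by
  apply clampR_eq_zero
  have h8 : (0:ℝ) < 8/δ := by positivity
  have : (8/δ) * (-(7/8*δ)) ≤ (8/δ) * p 1 := by gcongr
  have heq : (8/δ) * (-(7/8*δ)) = -7 := by field_simp
  nlinarith [heq ▸ this]

lemma ζc_one {δ : ℝ} (hδ : 0 < δ) {p : Plane} (h : p 1 ≤ -δ) : ζc δ p = 1 := by
  apply clampR_eq_one
  have h8 : (0:ℝ) < 8/δ := by positivity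
  have : (8/δ) * p 1 ≤ (8/δ) * (-δ) := by gcongr
  have heq : (8/δ) * (-δ) = -8 := by field_simp
  nlinarith [heq ▸ this]

noncomputable def Ffun (δ : ℝ) (g v : Plane → ℝ) (p : Plane) : ℝ :=
  ηc δ p * clampR (g p) + ζc δ p * clampR (v p)

lemma Ffun_mem {δ : ℝ} (hδ : 0 < δ) (g v : Plane → ℝ) (p : Plane) :
    Ffun δ g v p ∈ Icc (0:ℝ) 1 := by
  unfold Ffun
  constructor
  · have := (ηc_mem δ p).1; have := (ζc_mem δ p).1
    have := (clampR_mem (g p)).1; have := (clampR_mem (v p)).1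
    positivity
  · rcases le_or_gt (-(7/8*δ)) (p 1) with h | h
    · rw [ζc_zero hδ h]
      have h1 := (ηc_mem δ p).2; have h2 := (clampR_mem (g p)).2
      have h3 := (ηc_mem δ p).1; have h4 := (clampR_mem (g p)).1
      nlinarith
    · rw [ηc_zero hδ (by nlinarith)]
      have h1 := (ζc_mem δ p).2; have h2 := (clampR_mem (v p)).2
      have h3 := (ζc_mem δ p).1; have h4 := (clampR_mem (v p)).1
      nlinarith

lemma Ffun_eq_top {δ : ℝ} (hδ : 0 < δ) (g v : Plane → ℝ) {p : Plane} (h : -(δ/2) ≤ p 1) :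
    Ffun δ g v p = clampR (g p) := by
  unfold Ffun
  rw [ηc_one hδ h, ζc_zero hδ (by nlinarith), one_mul, zero_mul, add_zero]

lemma Ffun_eq_bot {δ : ℝ} (hδ : 0 < δ) (g v : Plane → ℝ) {p : Plane} (h : p 1 ≤ -δ) :
    Ffun δ g v p = clampR (v p) := by
  unfold Ffun
  rw [ζc_one hδ h, ηc_zero hδ (by nlinarith), one_mul, zero_mul, zero_add]

/-! ### ball membership helper -/

lemma ball_coord_gt {p : Plane} {t : ℝ} (h : t < p 1) :
    ∀ q ∈ ball p (p 1 - t), t < q 1 := by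
  intro q hq
  have h1 : |q 1 - p 1| ≤ dist q p := coord_dist q p 1
  have h2 : dist q p < p 1 - t := mem_ball.1 hq
  have := abs_lt.1 (h1.trans_lt h2)
  linarith [this.1]

lemma ball_coord_lt {p : Plane} {t : ℝ} (h : p 1 < t) :
    ∀ q ∈ ball p (t - p 1), q 1 < t := by
  intro q hq
  have h1 : |q 1 - p 1| ≤ dist q p := coord_dist q p 1
  have h2 : dist q p < t - p 1 := mem_ball.1 hq
  have := abs_lt.1 (h1.trans_lt h2)
  linarith [this.2]

/-! ### the master construction -/

lemma coordSet_meas_Ioi (t : ℝ) : MeasurableSet {p : Plane | t < p 1} :=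
  (coord_measurable 1) measurableSet_Ioi

lemma coordSet_meas_Ici (t : ℝ) : MeasurableSet {p : Plane | t ≤ p 1} :=
  (coord_measurable 1) measurableSet_Ici

lemma master (f ftop : Plane → ℝ)
    (hfr : ∀ p, f p ∈ Icc (0:ℝ) 1)
    (hagree : ∀ p : Plane, 0 ≤ p 1 → ftop p = f p)
    (c : ℝ) (hc : 0 < c) (hc2 : c ≤ 1/8)
    (A' : Set Plane) (hA'o : IsOpen A') (hHA' : Hup ⊆ A')
    (g : ℕ → Plane → ℝ) (hgL : ∀ n, LocLipOn (g n) A')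
    (hgconv : TendstoL1loc (mws.restrict A') g ftop)
    (v : ℕ → Plane → ℝ) (hvL : ∀ n, LocLipOn (v n) univ)
    (δ : ℕ → ℝ) (hδ0 : ∀ n, 0 < δ n) (hδc : ∀ n, δ n ≤ c) (hδto : Tendsto δ atTop (𝓝 0))
    (B : ℝ≥0∞)
    (hven : ∀ n, ∫⁻ p in DownS c (δ n / 2), lipa (v n) p ∂mws ≤ B)
    (hvconv : ∀ R : ℝ, 0 ≤ R → Tendsto (fun n =>
      ∫⁻ p in closedBall (0:Plane) R ∩ {q : Plane | q 1 ≤ -(δ n)},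
        ENNReal.ofReal |v n p - f p| ∂mws) atTop (𝓝 0)) :
    totVar mws f Hup ≤ (atTop.liminf fun n => ∫⁻ p in A', lipa (g n) p ∂mws) + B := by
  classical
  set A'' : Set Plane := A' ∩ Uset c with hA''def
  have hA''o : IsOpen A'' := hA'o.inter (Uset_open c)
  have hA''m : MeasurableSet A'' := hA''o.measurableSet
  have hHA'' : Hup ⊆ A'' := fun p hp => ⟨hHA' hp, Hup_subset_Uset hc hp⟩
  have hA''sub : A'' ⊆ A' := inter_subset_left
  set F : ℕ → Plane → ℝ := fun n => Ffun (δ n) (g n) (v n) with hFdef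
  set ν : Measure Plane := mws.restrict A'' with hνdef
  -- local Lipschitz property
  have hFloc : ∀ n, LocLipOn (F n) A'' := by
    intro n x hx
    obtain ⟨r1, hr1, hball1, K1, hK1⟩ := hgL n x (hA''sub hx)
    obtain ⟨r2, hr2, hball2, K2, hK2⟩ := hvL n x (mem_univ x)
    obtain ⟨r0, hr0, hball0⟩ := Metric.isOpen_iff.1 hA''o x hx
    refine ⟨min r0 (min r1 r2), by positivity, ?_, ?_⟩
    · exact (ball_subset_ball (min_le_left _ _)).trans hball0
    · set K := Real.toNNReal (8 / δ n)
      refine ⟨K + 1 * K1 + (K + 1 * K2), ?_⟩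
      have hcg : LipschitzOnWith (1 * K1) (fun p => clampR (g n p)) (ball x (min r0 (min r1 r2))) := by
        refine clampR_lipschitzWith.comp_lipschitzOnWith (hK1.mono ?_)
        exact (ball_subset_ball ((min_le_right _ _).trans (min_le_left _ _)))
      have hcv : LipschitzOnWith (1 * K2) (fun p => clampR (v n p)) (ball x (min r0 (min r1 r2))) := by
        refine clampR_lipschitzWith.comp_lipschitzOnWith (hK2.mono ?_)
        exact (ball_subset_ball ((min_le_right _ _).trans (min_le_right _ _)))
      exact lipOnWith_comb hcg hcv (fun p => clampR_mem _) (fun p => clampR_mem _)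
        (ηc_lips (hδ0 n)) (ζc_lips (hδ0 n)) (ηc_mem _) (ζc_mem _)
  -- pointwise lipa bounds
  have hb1 : ∀ n, ∀ p : Plane, -(δ n / 2) < p 1 → lipa (F n) p ≤ lipa (g n) p := by
    intro n p hp
    have heq : EqOn (F n) (fun q => clampR (g n q)) (ball p (p 1 - (-(δ n / 2)))) := by
      intro q hq
      exact Ffun_eq_top (hδ0 n) _ _ (ball_coord_gt hp q hq).le
    exact (lipa_le_of_eqOn heq (by linarith)).trans (lipa_comp_le clampR_abs (g n) p)
  have hb2 : ∀ n, ∀ p : Plane, -(7/8 * δ n) < p 1 →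
      lipa (F n) p ≤ lipa (g n) p + Real.toNNReal (8 / δ n) := by
    intro n p hp
    have heq : EqOn (F n) (fun q => ηc (δ n) q * clampR (g n q)) (ball p (p 1 - (-(7/8 * δ n)))) := by
      intro q hq
      have hq1 : -(7/8 * δ n) < q 1 := ball_coord_gt hp q hq
      show Ffun (δ n) (g n) (v n) q = _
      unfold Ffun
      rw [ζc_zero (hδ0 n) hq1.le, zero_mul, add_zero]
    refine (lipa_le_of_eqOn heq (by linarith)).trans ?_
    refine (lipa_mul_cutoff (ηc_mem _) (fun p => clampR_mem _) (ηc_lips (hδ0 n)) p).trans ?_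
    gcongr
    exact lipa_comp_le clampR_abs (g n) p
  have hb3 : ∀ n, ∀ p : Plane, p 1 < -(5/8 * δ n) →
      lipa (F n) p ≤ lipa (v n) p + Real.toNNReal (8 / δ n) := by
    intro n p hp
    have heq : EqOn (F n) (fun q => ζc (δ n) q * clampR (v n q)) (ball p (-(5/8 * δ n) - p 1)) := by
      intro q hq
      have hq1 : q 1 < -(5/8 * δ n) := ball_coord_lt hp q hq
      show Ffun (δ n) (g n) (v n) q = _
      unfold Ffun
      rw [ηc_zero (hδ0 n) hq1.le, zero_mul, zero_add]
    refine (lipa_le_of_eqOn heq (by linarith)).trans ?_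
    refine (lipa_mul_cutoff (ζc_mem _) (fun p => clampR_mem _) (ζc_lips (hδ0 n)) p).trans ?_
    gcongr
    exact lipa_comp_le clampR_abs (v n) p
  have hb4 : ∀ n, ∀ p : Plane, p 1 < -(δ n) → lipa (F n) p ≤ lipa (v n) p := by
    intro n p hp
    have heq : EqOn (F n) (fun q => clampR (v n q)) (ball p (-(δ n) - p 1)) := by
      intro q hq
      exact Ffun_eq_bot (hδ0 n) _ _ (ball_coord_lt hp q hq).le
    exact (lipa_le_of_eqOn heq (by linarith)).trans (lipa_comp_le clampR_abs (v n) p)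
  -- energy estimate
  set τ : ℕ → ℝ≥0∞ := fun n => ENNReal.ofReal (8 * Real.sqrt (2*c) * Real.sqrt (δ n)) with hτdef
  have hτto : Tendsto (fun n => τ n + τ n) atTop (𝓝 0) := by
    have h1 : Tendsto (fun n => 8 * Real.sqrt (2*c) * Real.sqrt (δ n)) atTop (𝓝 0) := by
      have hs : Tendsto (fun n => Real.sqrt (δ n)) atTop (𝓝 0) := by
        have := (Real.continuous_sqrt.tendsto 0).comp hδto
        simpa [Function.comp_def] using this
      have := hs.const_mul (8 * Real.sqrt (2*c))
      simpa [mul_comm, mul_assoc] using this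
    have h2 : Tendsto τ atTop (𝓝 0) := by
      rw [hτdef]
      have := ENNReal.tendsto_ofReal h1
      simpa using this
    simpa using h2.add h2
  have henergy : ∀ n, ∫⁻ p in A'', lipa (F n) p ∂mws ≤
      (∫⁻ p in A', lipa (g n) p ∂mws) + B + (τ n + τ n) := by
    intro n
    set δ' := δ n with hδ'def
    have hδ'0 : 0 < δ' := hδ0 n
    set K : ℝ≥0∞ := (Real.toNNReal (8 / δ') : ℝ≥0∞) with hKdef
    set Z1 : Set Plane := {p | -(δ'/2) < p 1} with hZ1
    set W : Set Plane := {p | -(7/8*δ') < p 1} with hW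
    set V : Set Plane := {p | -δ' ≤ p 1} with hV
    have hZ1m : MeasurableSet Z1 := coordSet_meas_Ioi _
    have hWm : MeasurableSet W := coordSet_meas_Ioi _
    have hVm : MeasurableSet V := coordSet_meas_Ici _
    have hsplit1 : ∫⁻ p in A'', lipa (F n) p ∂mws =
        ∫⁻ p in Z1, lipa (F n) p ∂ν + ∫⁻ p in Z1ᶜ, lipa (F n) p ∂ν :=
      (lintegral_add_compl _ hZ1m).symm
    have hsplit2 : ∫⁻ p in Z1ᶜ, lipa (F n) p ∂ν =
        ∫⁻ p in W ∩ Z1ᶜ, lipa (F n) p ∂ν + ∫⁻ p in Wᶜ ∩ Z1ᶜ, lipa (F n) p ∂ν := by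
      rw [← Measure.restrict_restrict hWm, ← Measure.restrict_restrict hWm.compl]
      exact (lintegral_add_compl _ hWm).symm
    have hsplit3 : ∫⁻ p in Wᶜ ∩ Z1ᶜ, lipa (F n) p ∂ν =
        ∫⁻ p in V ∩ (Wᶜ ∩ Z1ᶜ), lipa (F n) p ∂ν + ∫⁻ p in Vᶜ ∩ (Wᶜ ∩ Z1ᶜ), lipa (F n) p ∂ν := by
      rw [← Measure.restrict_restrict hVm, ← Measure.restrict_restrict hVm.compl]
      exact (lintegral_add_compl _ hVm).symm
    -- term bounds
    have hT1 : ∫⁻ p in Z1, lipa (F n) p ∂ν ≤ ∫⁻ p in Z1, lipa (g n) p ∂ν := by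
      apply lintegral_mono_ae
      filter_upwards [ae_restrict_mem hZ1m] with p hp
      exact hb1 n p hp
    have hT2 : ∫⁻ p in W ∩ Z1ᶜ, lipa (F n) p ∂ν ≤
        ∫⁻ p in W ∩ Z1ᶜ, lipa (g n) p ∂ν + K * ν (W ∩ Z1ᶜ) := by
      calc ∫⁻ p in W ∩ Z1ᶜ, lipa (F n) p ∂ν ≤ ∫⁻ p in W ∩ Z1ᶜ, (lipa (g n) p + K) ∂ν := by
            apply lintegral_mono_ae
            filter_upwards [ae_restrict_mem (hWm.inter hZ1m.compl)] with p hp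
            exact hb2 n p hp.1
        _ = ∫⁻ p in W ∩ Z1ᶜ, lipa (g n) p ∂ν + K * ν (W ∩ Z1ᶜ) := by
            rw [lintegral_add_right _ measurable_const, setLIntegral_const]
    have hT3 : ∫⁻ p in V ∩ (Wᶜ ∩ Z1ᶜ), lipa (F n) p ∂ν ≤
        ∫⁻ p in V ∩ (Wᶜ ∩ Z1ᶜ), lipa (v n) p ∂ν + K * ν (V ∩ (Wᶜ ∩ Z1ᶜ)) := by
      calc ∫⁻ p in V ∩ (Wᶜ ∩ Z1ᶜ), lipa (F n) p ∂ν
          ≤ ∫⁻ p in V ∩ (Wᶜ ∩ Z1ᶜ), (lipa (v n) p + K) ∂ν := by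
            apply lintegral_mono_ae
            filter_upwards [ae_restrict_mem (hVm.inter (hWm.compl.inter hZ1m.compl))] with p hp
            have hp1 : ¬ (-(7/8*δ') < p 1) := hp.2.1
            push_neg at hp1
            exact hb3 n p (by nlinarith)
        _ = _ := by rw [lintegral_add_right _ measurable_const, setLIntegral_const]
    have hT4 : ∫⁻ p in Vᶜ ∩ (Wᶜ ∩ Z1ᶜ), lipa (F n) p ∂ν ≤
        ∫⁻ p in Vᶜ ∩ (Wᶜ ∩ Z1ᶜ), lipa (v n) p ∂ν := by
      apply lintegral_mono_ae
      filter_upwards [ae_restrict_mem (hVm.compl.inter (hWm.compl.inter hZ1m.compl))] with p hp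
      have hp1 : ¬ (-δ' ≤ p 1) := hp.1
      push_neg at hp1
      exact hb4 n p hp1
    -- regroup g terms
    have hg_comb : ∫⁻ p in Z1, lipa (g n) p ∂ν + ∫⁻ p in W ∩ Z1ᶜ, lipa (g n) p ∂ν ≤
        ∫⁻ p in A', lipa (g n) p ∂mws := by
      have hdisj : Disjoint Z1 (W ∩ Z1ᶜ) :=
        Disjoint.mono_right inter_subset_right disjoint_compl_right
      have hcomb : ∫⁻ p in Z1, lipa (g n) p ∂ν + ∫⁻ p in W ∩ Z1ᶜ, lipa (g n) p ∂ν =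
          ∫⁻ p in Z1 ∪ (W ∩ Z1ᶜ), lipa (g n) p ∂ν := by
        rw [Measure.restrict_union hdisj (hWm.inter hZ1m.compl), lintegral_add_measure]
      rw [hcomb]
      have hmeas_le : ν.restrict (Z1 ∪ (W ∩ Z1ᶜ)) ≤ mws.restrict A' := by
        rw [hνdef, Measure.restrict_restrict (hZ1m.union (hWm.inter hZ1m.compl))]
        exact Measure.restrict_mono (fun p hp => hA''sub hp.2) le_rfl
      exact lintegral_mono' hmeas_le (fun p => le_rfl)
    -- regroup v terms
    have hv_comb : ∫⁻ p in V ∩ (Wᶜ ∩ Z1ᶜ), lipa (v n) p ∂ν +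
        ∫⁻ p in Vᶜ ∩ (Wᶜ ∩ Z1ᶜ), lipa (v n) p ∂ν ≤ B := by
      have hdisj : Disjoint (V ∩ (Wᶜ ∩ Z1ᶜ)) (Vᶜ ∩ (Wᶜ ∩ Z1ᶜ)) :=
        Disjoint.mono inter_subset_left inter_subset_left disjoint_compl_right
      have hcomb : ∫⁻ p in V ∩ (Wᶜ ∩ Z1ᶜ), lipa (v n) p ∂ν +
          ∫⁻ p in Vᶜ ∩ (Wᶜ ∩ Z1ᶜ), lipa (v n) p ∂ν =
          ∫⁻ p in (V ∩ (Wᶜ ∩ Z1ᶜ)) ∪ (Vᶜ ∩ (Wᶜ ∩ Z1ᶜ)), lipa (v n) p ∂ν := by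
        rw [Measure.restrict_union hdisj (hVm.compl.inter (hWm.compl.inter hZ1m.compl)),
          lintegral_add_measure]
      rw [hcomb]
      refine le_trans ?_ (hven n)
      have hmeas_le : ν.restrict ((V ∩ (Wᶜ ∩ Z1ᶜ)) ∪ (Vᶜ ∩ (Wᶜ ∩ Z1ᶜ))) ≤
          mws.restrict (DownS c (δ' / 2)) := by
        rw [hνdef, Measure.restrict_restrict
          (((hVm.inter (hWm.compl.inter hZ1m.compl))).union
            (hVm.compl.inter (hWm.compl.inter hZ1m.compl)))]
        refine Measure.restrict_mono ?_ le_rfl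
        rintro p ⟨hp1, hp2, hp3⟩
        have hWc : ¬ (-(7/8*δ') < p 1) := by
          rcases hp1 with h | h
          · exact h.2.1
          · exact h.2.1
        push_neg at hWc
        refine ⟨Uset_y_gt hc hp3, by nlinarith⟩
      exact lintegral_mono' hmeas_le (fun p => le_rfl)
    -- K terms
    have hK_band : ∀ S : Set Plane, MeasurableSet S →
        S ∩ A'' ⊆ {p : Plane | -δ' ≤ p 1 ∧ p 1 ≤ -(δ'/2)} → K * ν S ≤ τ n := by
      intro S hSm hSsub
      have hν : ν S = mws (S ∩ A'') := by rw [hνdef, Measure.restrict_apply hSm]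
      have hsub2 : S ∩ A'' ⊆ Uset c ∩ {p : Plane | -δ' ≤ p 1 ∧ p 1 ≤ -(δ'/2)} := by
        rintro p ⟨hpS, hpA⟩
        exact ⟨hpA.2, hSsub ⟨hpS, hpA⟩⟩
      calc K * ν S ≤ K * mws (Uset c ∩ {p : Plane | -δ' ≤ p 1 ∧ p 1 ≤ -(δ'/2)}) := by
            rw [hν]; exact mul_le_mul_right (measure_mono hsub2) _
        _ ≤ τ n := by
            rw [hτdef, hKdef]
            have : (Real.toNNReal (8 / δ') : ℝ≥0∞) = ENNReal.ofReal (8 / δ') := rfl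
            rw [this]
            exact band_cost_mul hc hδ'0 (hδc n) hc2
    have hK2 : K * ν (W ∩ Z1ᶜ) ≤ τ n := by
      refine hK_band _ (hWm.inter hZ1m.compl) ?_
      rintro p ⟨⟨hpW, hpZ⟩, _⟩
      have h1 : -(7/8*δ') < p 1 := hpW
      have h2 : ¬ (-(δ'/2) < p 1) := hpZ
      push_neg at h2
      exact ⟨by nlinarith, h2⟩
    have hK3 : K * ν (V ∩ (Wᶜ ∩ Z1ᶜ)) ≤ τ n := by
      refine hK_band _ (hVm.inter (hWm.compl.inter hZ1m.compl)) ?_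
      rintro p ⟨⟨hpV, hpW, hpZ⟩, _⟩
      have h1 : -δ' ≤ p 1 := hpV
      have h2 : ¬ (-(δ'/2) < p 1) := hpZ
      push_neg at h2
      exact ⟨h1, h2⟩
    calc ∫⁻ p in A'', lipa (F n) p ∂mws
        = ∫⁻ p in Z1, lipa (F n) p ∂ν + (∫⁻ p in W ∩ Z1ᶜ, lipa (F n) p ∂ν +
          (∫⁻ p in V ∩ (Wᶜ ∩ Z1ᶜ), lipa (F n) p ∂ν + ∫⁻ p in Vᶜ ∩ (Wᶜ ∩ Z1ᶜ), lipa (F n) p ∂ν)) := by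
          rw [hsplit1, hsplit2, hsplit3]
      _ ≤ (∫⁻ p in Z1, lipa (g n) p ∂ν + ∫⁻ p in W ∩ Z1ᶜ, lipa (g n) p ∂ν) +
          (∫⁻ p in V ∩ (Wᶜ ∩ Z1ᶜ), lipa (v n) p ∂ν + ∫⁻ p in Vᶜ ∩ (Wᶜ ∩ Z1ᶜ), lipa (v n) p ∂ν) +
          (K * ν (W ∩ Z1ᶜ) + K * ν (V ∩ (Wᶜ ∩ Z1ᶜ))) := by
          calc ∫⁻ p in Z1, lipa (F n) p ∂ν + (∫⁻ p in W ∩ Z1ᶜ, lipa (F n) p ∂ν +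
              (∫⁻ p in V ∩ (Wᶜ ∩ Z1ᶜ), lipa (F n) p ∂ν + ∫⁻ p in Vᶜ ∩ (Wᶜ ∩ Z1ᶜ), lipa (F n) p ∂ν))
              ≤ ∫⁻ p in Z1, lipa (g n) p ∂ν + ((∫⁻ p in W ∩ Z1ᶜ, lipa (g n) p ∂ν + K * ν (W ∩ Z1ᶜ)) +
                ((∫⁻ p in V ∩ (Wᶜ ∩ Z1ᶜ), lipa (v n) p ∂ν + K * ν (V ∩ (Wᶜ ∩ Z1ᶜ))) +
                  ∫⁻ p in Vᶜ ∩ (Wᶜ ∩ Z1ᶜ), lipa (v n) p ∂ν)) := by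
                exact add_le_add hT1 (add_le_add hT2 (add_le_add hT3 hT4))
            _ = _ := by ring
      _ ≤ (∫⁻ p in A', lipa (g n) p ∂mws) + B + (τ n + τ n) := by
          exact add_le_add (add_le_add hg_comb hv_comb) (add_le_add hK2 hK3)
  -- L¹loc convergence of the glued sequence
  have habs1 : ∀ (a b : ℝ), a ∈ Icc (0:ℝ) 1 → b ∈ Icc (0:ℝ) 1 → |a - b| ≤ 1 := by
    intro a b ha hb
    exact abs_le.2 ⟨by linarith [ha.1, hb.2], by linarith [ha.2, hb.1]⟩
  have hFconv : TendstoL1loc ν F f := by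
    intro S hS
    obtain ⟨R0, hR0⟩ := (isBounded_iff_subset_closedBall (0:Plane)).1 hS
    set R := max R0 0 with hRdef
    have hRnn : 0 ≤ R := le_max_right _ _
    have hSR : S ⊆ closedBall (0:Plane) R :=
      hR0.trans (closedBall_subset_closedBall (le_max_left _ _))
    set bl := closedBall (0:Plane) R with hbl
    have hblm : MeasurableSet bl := measurableSet_closedBall
    set Y : Set Plane := {p | (0:ℝ) ≤ p 1} with hY
    have hYm : MeasurableSet Y := coordSet_meas_Ici 0
    set a1 : ℕ → ℝ≥0∞ := fun n => ∫⁻ p in bl, ENNReal.ofReal |g n p - ftop p| ∂(mws.restrict A') with ha1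
    set a2 : ℕ → ℝ≥0∞ := fun n => ENNReal.ofReal ((2*δ n) * (2*R) * (2*δ n)) with ha2
    set a3 : ℕ → ℝ≥0∞ := fun n => ∫⁻ p in bl ∩ {q : Plane | q 1 ≤ -(δ n)},
      ENNReal.ofReal |v n p - f p| ∂mws with ha3
    have ha1to : Tendsto a1 atTop (𝓝 0) := hgconv bl (isBounded_closedBall)
    have ha2to : Tendsto a2 atTop (𝓝 0) := by
      have hr : Tendsto (fun n => (2*δ n) * (2*R) * (2*δ n)) atTop (𝓝 0) := by
        have h1 : Tendsto (fun n => 2*δ n) atTop (𝓝 0) := by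
          have := hδto.const_mul (2:ℝ)
          simpa using this
        have := (h1.mul_const (2*R)).mul h1
        simpa using this
      have := ENNReal.tendsto_ofReal hr
      simpa using this
    have ha3to : Tendsto a3 atTop (𝓝 0) := hvconv R hRnn
    have hmain : ∀ n, ∫⁻ p in S, ENNReal.ofReal |F n p - f p| ∂ν ≤ a1 n + a2 n + a3 n := by
      intro n
      set Vn : Set Plane := {p | -(δ n) ≤ p 1} with hVn
      have hVnm : MeasurableSet Vn := coordSet_meas_Ici _
      have step0 : ∫⁻ p in S, ENNReal.ofReal |F n p - f p| ∂ν ≤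
          ∫⁻ p in bl, ENNReal.ofReal |F n p - f p| ∂ν :=
        lintegral_mono' (Measure.restrict_mono hSR le_rfl) (fun p => le_rfl)
      have hsplitY : ∫⁻ p in bl, ENNReal.ofReal |F n p - f p| ∂ν =
          ∫⁻ p in Y ∩ (bl ∩ A''), ENNReal.ofReal |F n p - f p| ∂mws +
          ∫⁻ p in Yᶜ ∩ (bl ∩ A''), ENNReal.ofReal |F n p - f p| ∂mws := by
        have h0 : ν.restrict bl = mws.restrict (bl ∩ A'') := by
          rw [hνdef, Measure.restrict_restrict hblm]
        calc ∫⁻ p in bl, ENNReal.ofReal |F n p - f p| ∂ν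
            = ∫⁻ p, ENNReal.ofReal |F n p - f p| ∂(mws.restrict (bl ∩ A'')) := by rw [h0]
          _ = _ := by
              rw [← lintegral_add_compl (fun p => ENNReal.ofReal |F n p - f p|) hYm,
                Measure.restrict_restrict hYm, Measure.restrict_restrict hYm.compl]
      have hsplitV : ∫⁻ p in Yᶜ ∩ (bl ∩ A''), ENNReal.ofReal |F n p - f p| ∂mws =
          ∫⁻ p in Vn ∩ (Yᶜ ∩ (bl ∩ A'')), ENNReal.ofReal |F n p - f p| ∂mws +
          ∫⁻ p in Vnᶜ ∩ (Yᶜ ∩ (bl ∩ A'')), ENNReal.ofReal |F n p - f p| ∂mws := by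
        rw [← Measure.restrict_restrict hVnm, ← Measure.restrict_restrict hVnm.compl]
        exact (lintegral_add_compl _ hVnm).symm
      have hterm1 : ∫⁻ p in Y ∩ (bl ∩ A''), ENNReal.ofReal |F n p - f p| ∂mws ≤ a1 n := by
        calc ∫⁻ p in Y ∩ (bl ∩ A''), ENNReal.ofReal |F n p - f p| ∂mws
            ≤ ∫⁻ p in Y ∩ (bl ∩ A''), ENNReal.ofReal |g n p - ftop p| ∂mws := by
              apply lintegral_mono_ae
              filter_upwards [ae_restrict_mem (hYm.inter (hblm.inter hA''m))] with p hp
              apply ENNReal.ofReal_le_ofReal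
              have hp1 : (0:ℝ) ≤ p 1 := hp.1
              have hF : F n p = clampR (g n p) :=
                Ffun_eq_top (hδ0 n) _ _ (by nlinarith [hδ0 n])
              have hf : ftop p = f p := hagree p hp1
              rw [hF, hf]
              calc |clampR (g n p) - f p| = |clampR (g n p) - clampR (f p)| := by
                    rw [clampR_of_mem (hfr p)]
                _ ≤ |g n p - f p| := clampR_abs _ _
          _ ≤ a1 n := by
              rw [ha1]
              refine lintegral_mono' ?_ (fun p => le_rfl)
              rw [Measure.restrict_restrict hblm]
              have hsub' : Y ∩ (bl ∩ A'') ⊆ bl ∩ A' := fun p hp => ⟨hp.2.1, hA''sub hp.2.2⟩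
              exact Measure.restrict_mono hsub' le_rfl
      have hterm2 : ∫⁻ p in Vn ∩ (Yᶜ ∩ (bl ∩ A'')), ENNReal.ofReal |F n p - f p| ∂mws ≤ a2 n := by
        calc ∫⁻ p in Vn ∩ (Yᶜ ∩ (bl ∩ A'')), ENNReal.ofReal |F n p - f p| ∂mws
            ≤ ∫⁻ _ in Vn ∩ (Yᶜ ∩ (bl ∩ A'')), (1:ℝ≥0∞) ∂mws := by
              apply lintegral_mono_ae
              apply Eventually.of_forall
              intro p
              calc ENNReal.ofReal |F n p - f p| ≤ ENNReal.ofReal 1 :=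
                    ENNReal.ofReal_le_ofReal (habs1 _ _ (Ffun_mem (hδ0 n) _ _ p) (hfr p))
                _ = 1 := ENNReal.ofReal_one
          _ = mws (Vn ∩ (Yᶜ ∩ (bl ∩ A''))) := by
              rw [setLIntegral_const, one_mul]
          _ ≤ mws (bl ∩ StripS (2 * δ n)) := by
              apply measure_mono
              rintro p ⟨hp1, hp2, hp3, _⟩
              have h1 : -(δ n) ≤ p 1 := hp1
              have h2 : ¬ ((0:ℝ) ≤ p 1) := hp2
              push_neg at h2
              exact ⟨hp3, ⟨by nlinarith [hδ0 n], h2⟩⟩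
          _ ≤ ENNReal.ofReal ((2*δ n) * (2*R) * (2*δ n)) := by
              exact strip_ball_cost hRnn (s := 2*δ n) (by linarith [hδ0 n])
                (by linarith [hδ0 n, hδc n, hc2])
          _ = a2 n := rfl
      have hterm3 : ∫⁻ p in Vnᶜ ∩ (Yᶜ ∩ (bl ∩ A'')), ENNReal.ofReal |F n p - f p| ∂mws ≤ a3 n := by
        calc ∫⁻ p in Vnᶜ ∩ (Yᶜ ∩ (bl ∩ A'')), ENNReal.ofReal |F n p - f p| ∂mws
            ≤ ∫⁻ p in Vnᶜ ∩ (Yᶜ ∩ (bl ∩ A'')), ENNReal.ofReal |v n p - f p| ∂mws := by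
              apply lintegral_mono_ae
              filter_upwards [ae_restrict_mem (hVnm.compl.inter (hYm.compl.inter (hblm.inter hA''m)))]
                with p hp
              apply ENNReal.ofReal_le_ofReal
              have h1 : ¬ (-(δ n) ≤ p 1) := hp.1
              push_neg at h1
              have hF : F n p = clampR (v n p) := Ffun_eq_bot (hδ0 n) _ _ h1.le
              rw [hF]
              calc |clampR (v n p) - f p| = |clampR (v n p) - clampR (f p)| := by
                    rw [clampR_of_mem (hfr p)]
                _ ≤ |v n p - f p| := clampR_abs _ _
          _ ≤ a3 n := by
              rw [ha3]
              refine lintegral_mono' ?_ (fun p => le_rfl)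
              refine Measure.restrict_mono ?_ le_rfl
              rintro p ⟨hp1, hp2, hp3, _⟩
              have h1 : ¬ (-(δ n) ≤ p 1) := hp1
              push_neg at h1
              exact ⟨hp3, h1.le⟩
      calc ∫⁻ p in S, ENNReal.ofReal |F n p - f p| ∂ν
          ≤ ∫⁻ p in bl, ENNReal.ofReal |F n p - f p| ∂ν := step0
        _ = _ := hsplitY
        _ = ∫⁻ p in Y ∩ (bl ∩ A''), ENNReal.ofReal |F n p - f p| ∂mws +
            (∫⁻ p in Vn ∩ (Yᶜ ∩ (bl ∩ A'')), ENNReal.ofReal |F n p - f p| ∂mws +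
             ∫⁻ p in Vnᶜ ∩ (Yᶜ ∩ (bl ∩ A'')), ENNReal.ofReal |F n p - f p| ∂mws) := by
            rw [hsplitV]
        _ ≤ a1 n + (a2 n + a3 n) := add_le_add hterm1 (add_le_add hterm2 hterm3)
        _ = a1 n + a2 n + a3 n := by ring
    have hsum : Tendsto (fun n => a1 n + a2 n + a3 n) atTop (𝓝 0) := by
      have := (ha1to.add ha2to).add ha3to
      simpa using this
    exact tendsto_of_tendsto_of_tendsto_of_le_of_le tendsto_const_nhds hsum
      (fun n => zero_le) hmain
  -- final chain
  have hchain : totVar mws f Hup ≤ atTop.liminf (fun n => ∫⁻ p in A'', lipa (F n) p ∂mws) := by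
    calc totVar mws f Hup ≤ totVarOpen mws f A'' := by
          unfold totVar
          exact iInf_le_of_le A'' (iInf_le_of_le hA''o (iInf_le_of_le hHA'' le_rfl))
      _ ≤ atTop.liminf (fun n => ∫⁻ p in A'', lipa (F n) p ∂mws) := by
          unfold totVarOpen
          exact iInf_le_of_le F (iInf_le_of_le hFloc (iInf_le_of_le hFconv le_rfl))
  exact hchain.trans (liminf_le_add_of_tendsto hτto (Eventually.of_forall henergy))

/-! ### infimum helpers and direction I -/

lemma le_totVarOpen_add {μ : Measure Plane} {fb : Plane → ℝ} {A' : Set Plane} {x e : ℝ≥0∞}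
    (h : ∀ g : ℕ → Plane → ℝ, (∀ n, LocLipOn (g n) A') → TendstoL1loc (μ.restrict A') g fb →
      x ≤ (atTop.liminf fun n => ∫⁻ p in A', lipa (g n) p ∂μ) + e) :
    x ≤ totVarOpen μ fb A' + e := by
  unfold totVarOpen
  rw [ENNReal.iInf_add]
  refine le_iInf fun g => ?_
  rw [ENNReal.iInf_add]
  refine le_iInf fun h1 => ?_
  rw [ENNReal.iInf_add]
  exact le_iInf fun h2 => h g h1 h2

lemma le_totVar_add {μ : Measure Plane} {fb : Plane → ℝ} {x e : ℝ≥0∞}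
    (h : ∀ A' : Set Plane, IsOpen A' → Hup ⊆ A' → x ≤ totVarOpen μ fb A' + e) :
    x ≤ totVar μ fb Hup + e := by
  unfold totVar
  rw [ENNReal.iInf_add]
  refine le_iInf fun A' => ?_
  rw [ENNReal.iInf_add]
  refine le_iInf fun h1 => ?_
  rw [ENNReal.iInf_add]
  exact le_iInf fun h2 => h A' h1 h2

lemma indicator_inter_Hup {A : Set Plane} {p : Plane} (h : 0 ≤ p 1) :
    (A ∩ Hup).indicator (1 : Plane → ℝ) p = A.indicator 1 p := by
  have hmem : p ∈ Hup := h
  by_cases hA : p ∈ A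
  · have hAH : p ∈ A ∩ Hup := ⟨hA, hmem⟩
    rw [Set.indicator_of_mem hAH, Set.indicator_of_mem hA]
  · have hAH : p ∉ A ∩ Hup := fun hc => hA hc.1
    rw [Set.indicator_of_notMem hAH, Set.indicator_of_notMem hA]

lemma dir1 (A : Set Plane) : perIn mws (A ∩ Hup) Hup ≤ perIn mws A Hup := by
  unfold perIn
  have key : ∀ A' : Set Plane, IsOpen A' → Hup ⊆ A' →
      totVar mws ((A ∩ Hup).indicator 1) Hup ≤ totVarOpen mws (A.indicator 1) A' + 0 := by
    intro A' hA'o hHA'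
    refine le_totVarOpen_add fun g hgL hgconv => ?_
    have hv0 : ∀ _n : ℕ, LocLipOn (fun _ : Plane => (0:ℝ)) univ := by
      intro n x _
      exact ⟨1, one_pos, subset_univ _, 0, (LipschitzWith.const (0:ℝ)).lipschitzOnWith⟩
    set δseq : ℕ → ℝ := fun n => (1/8) / (n+1) with hδseq
    have happ := master ((A ∩ Hup).indicator 1) (A.indicator 1)
      (indicator_mem_Icc _) (fun p hp => (indicator_inter_Hup hp).symm)
      (1/8) (by norm_num) (by norm_num) A' hA'o hHA' g hgL hgconv
      (fun _ _ => 0) (fun n => hv0 n)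
      δseq
      (fun n => by positivity)
      (fun n => by
        rw [hδseq]
        exact div_le_self (by norm_num) (by linarith [Nat.cast_nonneg (α := ℝ) n]))
      (by
        rw [hδseq]
        have h := tendsto_one_div_add_atTop_nhds_zero_nat (𝕜 := ℝ)
        have := h.const_mul (1/8 : ℝ)
        simpa [div_eq_mul_inv, mul_comm] using this)
      0
      (fun n => by
        have : ∀ p : Plane, lipa (fun _ => (0:ℝ)) p = 0 := fun p => lipa_const 0 p
        simp only [this]
        simp)
      (fun R hR => by
        have heq : ∀ n, ∫⁻ p in closedBall (0:Plane) R ∩ {q : Plane | q 1 ≤ -(δseq n)},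
            ENNReal.ofReal |(fun _ => (0:ℝ)) p - (A ∩ Hup).indicator 1 p| ∂mws = 0 := by
          intro n
          refine le_antisymm ?_ zero_le
          have hset : MeasurableSet (closedBall (0:Plane) R ∩ {q : Plane | q 1 ≤ -(δseq n)}) :=
            measurableSet_closedBall.inter ((coord_measurable 1) measurableSet_Iic)
          calc ∫⁻ p in closedBall (0:Plane) R ∩ {q : Plane | q 1 ≤ -(δseq n)},
              ENNReal.ofReal |(fun _ => (0:ℝ)) p - (A ∩ Hup).indicator 1 p| ∂mws
              ≤ ∫⁻ _ in closedBall (0:Plane) R ∩ {q : Plane | q 1 ≤ -(δseq n)}, 0 ∂mws := by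
                apply lintegral_mono_ae
                filter_upwards [ae_restrict_mem hset] with p hp
                have hδpos : 0 < δseq n := by rw [hδseq]; positivity
                have hnot : p ∉ A ∩ Hup := by
                  rintro ⟨_, hH⟩
                  have h1 : p 1 ≤ -(δseq n) := hp.2
                  have h2 : (0:ℝ) ≤ p 1 := hH
                  linarith
                rw [Set.indicator_of_notMem hnot]
                simp
            _ = 0 := by simp
        simp only [heq]
        exact tendsto_const_nhds)
    exact happ
  have := le_totVar_add (μ := mws) (fb := A.indicator 1)
    (x := totVar mws ((A ∩ Hup).indicator 1) Hup) (e := 0) key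
  rwa [add_zero] at this

/-! ### direction II -/

lemma dir2 (A : Set Plane) (hAper : per mws A < ⊤) :
    perIn mws A Hup ≤ perIn mws (A ∩ Hup) Hup := by
  unfold perIn
  refine ENNReal.le_of_forall_pos_le_add fun ε0 hε0 hfin => ?_
  set ε : ℝ≥0∞ := (ε0 : ℝ≥0∞) / 3 with hεdef
  have hε : 0 < ε := ENNReal.div_pos (by exact_mod_cast hε0.ne') (by norm_num)
  have hεt : ε ≠ ⊤ := (ENNReal.div_lt_top ENNReal.coe_ne_top (by norm_num)).ne
  -- extract a global finite-energy sequence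
  have h0 : totVar mws (A.indicator 1) univ < ⊤ := hAper
  unfold totVar at h0
  obtain ⟨A₀, h0⟩ := iInf_lt_top.1 h0
  obtain ⟨hA₀o, h0⟩ := iInf_lt_top.1 h0
  obtain ⟨hA₀sub, h0⟩ := iInf_lt_top.1 h0
  have hA₀ : A₀ = univ := univ_subset_iff.1 hA₀sub
  subst hA₀
  unfold totVarOpen at h0
  obtain ⟨u, h0⟩ := iInf_lt_top.1 h0
  obtain ⟨huL, h0⟩ := iInf_lt_top.1 h0
  obtain ⟨huconv, hPlt⟩ := iInf_lt_top.1 h0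
  rw [Measure.restrict_univ] at huconv
  set P : ℝ≥0∞ := (atTop.liminf fun n => ∫⁻ p in univ, lipa (u n) p ∂mws) + 1 with hPdef
  have hPfin : P ≠ ⊤ := ENNReal.add_ne_top.2 ⟨hPlt.ne, ENNReal.one_ne_top⟩
  have hfreqP : ∃ᶠ j in atTop, (∫⁻ p in univ, lipa (u j) p ∂mws) < P :=
    frequently_lt_of_liminf_lt (by isBoundedDefault) (ENNReal.lt_add_right hPlt.ne one_ne_zero)
  obtain ⟨φ₀, hφ₀mono, hφ₀P⟩ := exists_strictMono_forall
    (P := fun _ j => (∫⁻ p in univ, lipa (u j) p ∂mws) < P)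
    (fun n m => by
      obtain ⟨j, hj1, hj2⟩ := frequently_atTop.1 hfreqP m
      exact ⟨j, hj1, hj2⟩)
  set w : ℕ → Plane → ℝ := fun j => u (φ₀ j) with hwdef
  have hwP : ∀ j, (∫⁻ p, lipa (w j) p ∂mws) ≤ P := by
    intro j
    have := (hφ₀P j).le
    rwa [Measure.restrict_univ] at this
  have hwL : ∀ j, LocLipOn (w j) univ := fun j => huL (φ₀ j)
  have hwconv : TendstoL1loc mws w (A.indicator 1) :=
    fun S hS => (huconv S hS).comp hφ₀mono.tendsto_atTop
  -- the claim: good strips with small mass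
  set ρ : ℕ → ℕ → ℝ≥0∞ := fun j k => ∫⁻ p in StripS ((1/2:ℝ)^k), lipa (w j) p ∂mws with hρdef
  have hρP : ∀ j k, ρ j k ≤ P := fun j k =>
    le_trans (lintegral_mono' Measure.restrict_le_self fun p => le_rfl) (hwP j)
  have hρanti : ∀ j : ℕ, ∀ {k k' : ℕ}, k ≤ k' → ρ j k' ≤ ρ j k := by
    intro j k k' hkk
    refine lintegral_mono' (Measure.restrict_mono ?_ le_rfl) fun p => le_rfl
    intro p hp
    have hple : ((1:ℝ)/2)^k' ≤ (1/2)^k :=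
      pow_le_pow_of_le_one (by norm_num) (by norm_num) hkk
    have hp1 : -((1:ℝ)/2)^k' < p 1 := hp.1
    exact ⟨by linarith, hp.2⟩
  set chat : ℕ → ℝ≥0∞ := fun k => atTop.liminf fun j => ρ j k with hchat
  have hchatP : ∀ k, chat k ≤ P := fun k =>
    liminf_le_of_frequently_le (Frequently.of_forall fun j => hρP j k)
  have hchatfin : ∀ k, chat k ≠ ⊤ := fun k => (lt_of_le_of_lt (hchatP k) hPfin.lt_top).ne
  have hchatanti : ∀ {k k' : ℕ}, k ≤ k' → chat k' ≤ chat k := fun hkk =>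
    liminf_le_liminf (Eventually.of_forall fun j => hρanti j hkk)
  have hcsfin : (⨅ k, chat k) ≠ ⊤ :=
    (lt_of_le_of_lt (iInf_le _ 0) (hchatfin 0).lt_top).ne
  obtain ⟨k₁, hk₁⟩ := iInf_lt_iff.1
    (show (⨅ k, chat k) < (⨅ k, chat k) + ε from ENNReal.lt_add_right hcsfin hε.ne')
  set k₀ := max k₁ 3 with hk₀def
  have hck₀ : chat k₀ ≤ (⨅ k, chat k) + ε :=
    le_trans (hchatanti (le_max_left _ _)) hk₁.le
  set c : ℝ := (1/2:ℝ)^k₀ with hcdef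
  have hc : 0 < c := by rw [hcdef]; positivity
  have hc2 : c ≤ 1/8 := by
    rw [hcdef]
    calc ((1:ℝ)/2)^k₀ ≤ (1/2)^3 :=
          pow_le_pow_of_le_one (by norm_num) (by norm_num) (le_max_right _ _)
      _ = 1/8 := by norm_num
  have claimfreq : ∀ k : ℕ, k₀ + 1 ≤ k → ∃ᶠ j in atTop,
      (∫⁻ p in DownS c ((1/2:ℝ)^k), lipa (w j) p ∂mws) ≤ 3 * ε := by
    intro k hk
    have hsplit : ∀ j, ρ j k₀ = ρ j k + ∫⁻ p in DownS c ((1/2:ℝ)^k), lipa (w j) p ∂mws := by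
      intro j
      exact strip_split mws (fun p => lipa (w j) p) (by positivity)
        (pow_le_pow_of_le_one (by norm_num) (by norm_num) (by omega))
    have E1 : ∀ᶠ j in atTop, chat k ≤ ρ j k + ε := myEventually_liminf_le (hchatfin k) hε hεt
    have F1 : ∃ᶠ j in atTop, ρ j k₀ ≤ chat k₀ + ε := frequently_le_liminf_add (hchatfin k₀) hε
    refine (F1.and_eventually E1).mono ?_
    rintro j ⟨h1, h2⟩
    have hchain : (∫⁻ p in DownS c ((1/2:ℝ)^k), lipa (w j) p ∂mws) + ρ j k ≤ 3 * ε + ρ j k := by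
      calc (∫⁻ p in DownS c ((1/2:ℝ)^k), lipa (w j) p ∂mws) + ρ j k
          = ρ j k₀ := by rw [hsplit j, add_comm]
        _ ≤ chat k₀ + ε := h1
        _ ≤ ((⨅ k', chat k') + ε) + ε := add_le_add_left hck₀ _
        _ ≤ (chat k + ε) + ε := by gcongr; exact iInf_le _ k
        _ ≤ ((ρ j k + ε) + ε) + ε := by gcongr
        _ = 3 * ε + ρ j k := by ring
    exact (ENNReal.add_le_add_iff_right
      (lt_of_le_of_lt (hρP j k) hPfin.lt_top).ne).1 hchain
  obtain ⟨φ₁, hφ₁mono, hφ₁⟩ := exists_strictMono_forall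
    (P := fun n j => (∫⁻ p in DownS c ((1/2:ℝ)^(k₀+n+2)), lipa (w j) p ∂mws) ≤ 3 * ε)
    (fun n m => by
      obtain ⟨j, hj1, hj2⟩ := frequently_atTop.1 (claimfreq (k₀+n+2) (by omega)) m
      exact ⟨j, hj1, hj2⟩)
  -- apply the master lemma against every competitor
  have key : ∀ A' : Set Plane, IsOpen A' → Hup ⊆ A' →
      totVar mws (A.indicator 1) Hup ≤ totVarOpen mws ((A ∩ Hup).indicator 1) A' + (ε0:ℝ≥0∞) := by
    intro A' hA'o hHA'
    refine le_totVarOpen_add fun g hgL hgconv => ?_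
    set δseq : ℕ → ℝ := fun n => 2 * (1/2:ℝ)^(k₀+n+2) with hδseq
    have hδeq : ∀ n, δseq n = (1/2:ℝ)^(k₀+n+1) := by
      intro n
      show 2 * ((1:ℝ)/2)^(k₀+n+2) = (1/2)^(k₀+n+1)
      have h2 : (k₀+n+2) = (k₀+n+1) + 1 := by omega
      rw [h2, pow_succ]
      ring
    have happ := master (A.indicator 1) ((A ∩ Hup).indicator 1)
      (indicator_mem_Icc _) (fun p hp => indicator_inter_Hup hp)
      c hc hc2 A' hA'o hHA' g hgL hgconv
      (fun n => w (φ₁ n)) (fun n => hwL (φ₁ n))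
      δseq
      (fun n => by rw [hδseq]; positivity)
      (fun n => by
        rw [hδeq n, hcdef]
        exact pow_le_pow_of_le_one (by norm_num) (by norm_num) (by omega))
      (by
        have h1 : Tendsto (fun n : ℕ => ((1:ℝ)/2)^n) atTop (𝓝 0) :=
          tendsto_pow_atTop_nhds_zero_of_lt_one (by norm_num) (by norm_num)
        have h2 : Tendsto (fun n : ℕ => ((1:ℝ)/2)^(k₀+n+1)) atTop (𝓝 0) := by
          have heq2 : ∀ n : ℕ, ((1:ℝ)/2)^(k₀+n+1) = (1/2)^(k₀+1) * (1/2)^n := by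
            intro n
            rw [← pow_add]
            congr 1
            omega
          simp only [heq2]
          simpa using h1.const_mul (((1:ℝ)/2)^(k₀+1))
        have heq3 : δseq = fun n : ℕ => ((1:ℝ)/2)^(k₀+n+1) := funext hδeq
        rw [heq3]
        exact h2)
      (3 * ε)
      (fun n => by
        have hhalf : δseq n / 2 = (1/2:ℝ)^(k₀+n+2) := by
          rw [hδseq]
          ring
        rw [hhalf]
        exact hφ₁ n)
      (fun R hR => by
        have hbd : ∀ n, ∫⁻ p in closedBall (0:Plane) R ∩ {q : Plane | q 1 ≤ -(δseq n)},
            ENNReal.ofReal |w (φ₁ n) p - A.indicator 1 p| ∂mws ≤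
            ∫⁻ p in closedBall (0:Plane) R,
            ENNReal.ofReal |w (φ₁ n) p - A.indicator 1 p| ∂mws := fun n =>
          lintegral_mono' (Measure.restrict_mono inter_subset_left le_rfl) fun p => le_rfl
        have hto : Tendsto (fun n => ∫⁻ p in closedBall (0:Plane) R,
            ENNReal.ofReal |w (φ₁ n) p - A.indicator 1 p| ∂mws) atTop (𝓝 0) :=
          (hwconv (closedBall 0 R) isBounded_closedBall).comp hφ₁mono.tendsto_atTop
        exact tendsto_of_tendsto_of_tendsto_of_le_of_le tendsto_const_nhds hto
          (fun n => zero_le) hbd)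
    refine happ.trans ?_
    gcongr
    exact le_of_eq (by rw [hεdef]; exact ENNReal.mul_div_cancel' (by norm_num) (by norm_num))
  exact le_totVar_add key

/-- In the weighted plane, for every Borel `A ⊆ Ω` of finite perimeter,
`Per(A ∩ H; H) = Per(A; H)` where `H` is the closed upper half-plane. -/
theorem per_inter_halfplane_eq
    (A : Set Plane) (hA : A ⊆ Ωset) (hAm : MeasurableSet A) (hAper : per mws A < ⊤) :
    perIn mws (A ∩ Hup) Hup = perIn mws A Hup :=
  le_antisymm (dir1 A) (dir2 A hAper)
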